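/- Let d ≥ 2 and s(d)=d(d+1)/2. For any interval [a,b] ⊆ [1/2,1] with b−a ≤ 1/(2d), letting μ_{[a,b]} be the pushforward of Lebesgue measure on [a,b] under t ↦ (t,…,t^d) and D_N = {ξ ∈ ℤ^d : |ξ_i| ≤ s(d)N^i}, we have ∑_{ξ ∈ D_N} |μ̂_{[a,b]}(ξ)|² ≤ C N^{s(d)-d}, with C depending only on d. -/

import Mathlib

open MeasureTheory intervalIntegral
open scoped ENNReal NNReal

noncomputable def e (x : ℝ) : ℂ := Complex.exp (2 * Real.pi * Complex.I * x)

lemma e_cont : Continuous e :=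
  Complex.continuous_exp.comp (continuous_const.mul Complex.continuous_ofReal)

lemma norm_e (x : ℝ) : ‖e x‖ = 1 := by
  have h : (2 * (Real.pi:ℂ) * Complex.I * x) = ((2 * Real.pi * x : ℝ) : ℂ) * Complex.I := by
    push_cast; ring
  rw [e, h, Complex.norm_exp_ofReal_mul_I]

lemma conj_e (x : ℝ) : (starRingEnd ℂ) (e x) = e (-x) := by
  rw [e, e, ← Complex.exp_conj]
  congr 1
  simp only [map_mul, map_ofNat, Complex.conj_I, Complex.conj_ofReal]
  push_cast
  ring

lemma e_add (x y : ℝ) : e (x + y) = e x * e y := by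
  rw [e, e, e, ← Complex.exp_add]
  congr 1
  push_cast
  ring

/-- key oscillatory integral: for `k ≠ 0`,
`∫_{a}^{a'} d t^{d-1} e(k t^d) dt = (e(k a'^d) - e(k a^d))/(2πik)`, which vanishes
when `a'^d = a^d + 1`. -/
lemma osc_integral (k : ℕ) (a a' : ℝ) (n : ℤ) (hn : n ≠ 0) (h : a' ^ (k+1) = a ^ (k+1) + 1) :
    ∫ t in a..a', (((k:ℝ)+1) * t ^ k : ℝ) * e ((n:ℝ) * t ^ (k+1)) = 0 := by
  set d : ℕ := k + 1 with hd
  set c : ℂ := 2 * Real.pi * Complex.I * n with hc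
  have hc0 : c ≠ 0 := by
    simp only [hc]
    have : (n:ℂ) ≠ 0 := Int.cast_ne_zero.mpr hn
    simp [Real.pi_ne_zero, Complex.I_ne_zero, this]
  have he : ∀ t : ℝ, e ((n:ℝ) * t ^ d) = Complex.exp (c * (t:ℂ) ^ d) := by
    intro t
    rw [e]
    congr 1
    push_cast
    ring
  have hF : ∀ t : ℝ, HasDerivAt (fun s : ℝ => Complex.exp (c * (s:ℂ) ^ d) / c)
      ((((k:ℝ)+1) * t ^ k : ℝ) * e ((n:ℝ) * t ^ d)) t := by
    intro t
    have h1 : HasDerivAt (fun z : ℂ => Complex.exp (c * z ^ d) / c)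
        (Complex.exp (c * (t:ℂ) ^ d) * (c * (d * (t:ℂ) ^ (d-1))) / c) (t:ℝ) := by
      exact (((hasDerivAt_pow d (t:ℂ)).const_mul c).cexp).div_const c
    have h2 := h1.comp_ofReal
    convert h2 using 1
    rw [he]
    have : (d : ℂ) * (t:ℂ) ^ (d - 1) = ((k:ℝ)+1 : ℂ) * ((t:ℝ):ℂ) ^ k := by
      push_cast [hd]
      ring
    field_simp
    push_cast
    simp only [hd, Nat.add_sub_cancel]
    push_cast
    ring
  have hcont : Continuous fun t : ℝ => ((((k:ℝ)+1) * t ^ k : ℝ) : ℂ) * e ((n:ℝ) * t ^ d) := by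
    apply Continuous.mul
    · exact Complex.continuous_ofReal.comp ((continuous_const.mul (continuous_pow k)))
    · exact e_cont.comp (continuous_const.mul (continuous_pow d))
  rw [integral_eq_sub_of_hasDerivAt (fun t _ => hF t) (hcont.intervalIntegrable a a')]
  have h1 : ((a':ℝ):ℂ) ^ d = ((a:ℝ):ℂ) ^ d + 1 := by
    rw [show ((a':ℝ):ℂ) ^ d = ((a' ^ d : ℝ) : ℂ) by push_cast; ring, h]
    push_cast
    ring
  rw [h1, mul_add, Complex.exp_add, mul_one]
  have h2 : Complex.exp c = 1 := by
    have : c = (n:ℂ) * (2 * Real.pi * Complex.I) := by rw [hc]; ring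
    rw [this, Complex.exp_int_mul_two_pi_mul_I]
  simp [h2]

set_option maxHeartbeats 1000000 in
lemma core (k : ℕ) (a b : ℝ) (ha : 1/2 ≤ a) (hab : a ≤ b) (hb : b ≤ 1)
    (P : ℝ → ℝ) (hP : Continuous P) (S : Finset ℤ) :
    ∑ n ∈ S, ‖∫ t in a..b, e (-(P t + t ^ (k+1) * (n : ℝ)))‖ ^ 2 ≤ 2 ^ (k + 3) := by
  set d : ℕ := k + 1 with hd
  have ha0 : (0:ℝ) < a := lt_of_lt_of_le (by norm_num) ha
  have hb0 : (0:ℝ) < b := lt_of_lt_of_le ha0 hab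
  set a' : ℝ := (a ^ d + 1) ^ ((d:ℝ)⁻¹) with ha'
  have hapd : (0:ℝ) < a ^ d + 1 := by positivity
  have ha'd : a' ^ d = a ^ d + 1 := Real.rpow_inv_natCast_pow (le_of_lt hapd) (by omega)
  have ha'pos : (0:ℝ) < a' := Real.rpow_pos_of_pos hapd _
  have hba' : b ≤ a' := by
    have h1 : b ^ d ≤ a' ^ d := by
      rw [ha'd]
      have : b ^ d ≤ 1 := pow_le_one₀ (le_of_lt hb0) hb
      nlinarith [pow_nonneg (le_of_lt ha0) d]
    exact le_of_pow_le_pow_left₀ (by omega) (le_of_lt ha'pos) h1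
  have haa' : a ≤ a' := le_trans hab hba'
  have ha'2 : a' ≤ 2 := by
    have h1 : a' ^ d ≤ 2 ^ d := by
      rw [ha'd]
      have h2 : a ^ d ≤ 1 := pow_le_one₀ (le_of_lt ha0) (le_trans hab hb)
      have h3 : (2:ℝ) ≤ 2 ^ d := le_self_pow₀ (by norm_num) (by omega)
      linarith
    exact le_of_pow_le_pow_left₀ (by omega) (by norm_num) h1
  set μ : Measure ℝ := volume.restrict (Set.Ioc a a') with hμ
  haveI : IsFiniteMeasure μ := by
    constructor
    rw [hμ, Measure.restrict_apply_univ, Real.volume_Ioc]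
    exact ENNReal.ofReal_lt_top
  -- the weight
  set w : ℝ → ℝ := fun t => Real.sqrt (d * t ^ k) with hw
  have hw_cont : Continuous w := (continuous_const.mul (continuous_pow k)).sqrt
  set c0 : ℝ := Real.sqrt (d * (1/2) ^ k) with hc0
  have hc0pos : 0 < c0 := Real.sqrt_pos.mpr (by positivity)
  have hwlb : ∀ t : ℝ, 1/2 ≤ t → c0 ≤ w t := by
    intro t ht
    apply Real.sqrt_le_sqrt
    have : (1/2:ℝ) ^ k ≤ t ^ k := pow_le_pow_left₀ (by norm_num) ht k
    have hd1 : (1:ℝ) ≤ d := by exact_mod_cast Nat.one_le_iff_ne_zero.mpr (by omega)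
    nlinarith
  have hwub : ∀ t : ℝ, 0 ≤ t → t ≤ 2 → w t ≤ Real.sqrt (d * 2 ^ k) := by
    intro t ht0 ht2
    apply Real.sqrt_le_sqrt
    have : t ^ k ≤ 2 ^ k := pow_le_pow_left₀ ht0 ht2 k
    have hd0 : (0:ℝ) ≤ d := by positivity
    nlinarith
  have hwpos : ∀ t : ℝ, 1/2 ≤ t → 0 < w t := fun t ht => lt_of_lt_of_le hc0pos (hwlb t ht)
  -- the orthonormal family and the test function
  set φ : ℤ → ℝ → ℂ := fun n t => (w t : ℂ) * e ((n:ℝ) * t ^ d) with hφ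
  set f₀ : ℝ → ℂ := Set.indicator (Set.Ioc a b) (fun t => e (-(P t)) * ((w t : ℂ))⁻¹) with hf₀
  have hφc : ∀ n : ℤ, Continuous (φ n) := by
    intro n
    exact (Complex.continuous_ofReal.comp hw_cont).mul
      (e_cont.comp (continuous_const.mul (continuous_pow d)))
  have hφmem : ∀ n : ℤ, MemLp (φ n) 2 μ := by
    intro n
    apply MemLp.of_bound (hφc n).aestronglyMeasurable (Real.sqrt (d * 2 ^ k))
    rw [hμ]
    rw [ae_restrict_iff' measurableSet_Ioc]
    apply ae_of_all
    intro t ht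
    rw [hφ]
    simp only [norm_mul, Complex.norm_real, norm_e, mul_one]
    rw [Real.norm_eq_abs, abs_of_nonneg (Real.sqrt_nonneg _)]
    exact hwub t (le_trans (by linarith) (le_of_lt ht.1)) (le_trans ht.2 ha'2)
  have hf₀meas : AEStronglyMeasurable f₀ μ := by
    apply Measurable.aestronglyMeasurable
    apply Measurable.indicator _ measurableSet_Ioc
    exact ((e_cont.comp (hP.neg)).measurable).mul
      ((Complex.measurable_ofReal.comp hw_cont.measurable).inv)
  have hf₀bd : ∀ t : ℝ, ‖f₀ t‖ ≤ c0⁻¹ := by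
    intro t
    rw [hf₀]
    by_cases ht : t ∈ Set.Ioc a b
    · rw [Set.indicator_of_mem ht]
      have h1 : 1/2 ≤ t := le_trans ha (le_of_lt ht.1)
      simp only [norm_mul, norm_e, one_mul, norm_inv, Complex.norm_real]
      rw [Real.norm_eq_abs, abs_of_nonneg (Real.sqrt_nonneg _)]
      exact inv_anti₀ hc0pos (hwlb t h1)
    · rw [Set.indicator_of_notMem ht]
      simp [le_of_lt (inv_pos.mpr hc0pos)]
  have hf₀mem : MemLp f₀ 2 μ := MemLp.of_bound hf₀meas c0⁻¹ (ae_of_all _ hf₀bd)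
  -- key integral computation
  have key : ∀ n m : ℤ, (∫ t, (starRingEnd ℂ) (φ n t) * φ m t ∂μ) =
      if n = m then 1 else 0 := by
    intro n m
    have step1 : (∫ t, (starRingEnd ℂ) (φ n t) * φ m t ∂μ) =
        ∫ t in a..a', (((d:ℝ)) * t ^ k : ℝ) * e (((m - n : ℤ):ℝ) * t ^ d) := by
      rw [hμ, integral_of_le haa']
      apply setIntegral_congr_fun measurableSet_Ioc
      intro t ht
      have ht2 : (1:ℝ)/2 ≤ t := le_trans ha (le_of_lt ht.1)
      have ht0 : (0:ℝ) ≤ t := by linarith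
      rw [hφ]
      simp only
      have hsq : (w t : ℂ) * (w t : ℂ) = ((d * t ^ k : ℝ) : ℂ) := by
        rw [← Complex.ofReal_mul]
        congr 1
        exact Real.mul_self_sqrt (by positivity)
      calc (starRingEnd ℂ) ((w t : ℂ) * e ((n:ℝ) * t ^ d)) * ((w t : ℂ) * e ((m:ℝ) * t ^ d))
          = ((w t : ℂ) * (w t : ℂ)) * ((starRingEnd ℂ) (e ((n:ℝ) * t ^ d)) * e ((m:ℝ) * t ^ d)) := by
            rw [map_mul, Complex.conj_ofReal]; ring
        _ = ((d * t ^ k : ℝ) : ℂ) * e (((m - n : ℤ):ℝ) * t ^ d) := by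
            rw [hsq, conj_e, ← e_add]
            congr 2
            push_cast
            ring
    rw [step1]
    by_cases hnm : n = m
    · subst hnm
      simp only [sub_self, Int.cast_zero, zero_mul, if_true]
      have he0 : e (0:ℝ) = 1 := by
        rw [e]
        simp
      simp only [he0, mul_one]
      rw [intervalIntegral.integral_ofReal]
      rw [intervalIntegral.integral_const_mul, integral_pow]
      have hdne : ((k:ℝ) + 1) ≠ 0 := by positivity
      rw [show a' ^ (k+1) = a ^ (k+1) + 1 from ha'd]
      push_cast
      field_simp
      push_cast [hd]
      ring
    · simp only [hnm, if_false]
      have hk : (m - n : ℤ) ≠ 0 := sub_ne_zero.mpr (Ne.symm hnm)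
      have := osc_integral k a a' (m - n) hk ha'd
      rw [show ((d:ℝ)) = (k:ℝ) + 1 by push_cast [hd]; ring]
      exact this
  -- move to Lp
  set Φ : ℤ → Lp ℂ 2 μ := fun n => (hφmem n).toLp (φ n) with hΦ
  set Fl : Lp ℂ 2 μ := hf₀mem.toLp f₀ with hFl
  have hinner_eq : ∀ (n : ℤ) (g : ℝ → ℂ) (hg : MemLp g 2 μ),
      (inner ℂ (Φ n) (hg.toLp g) : ℂ) = ∫ t, (starRingEnd ℂ) (φ n t) * g t ∂μ := by
    intro n g hg
    rw [MeasureTheory.L2.inner_def]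
    apply MeasureTheory.integral_congr_ae
    filter_upwards [(hφmem n).coeFn_toLp, hg.coeFn_toLp] with t h1 h2
    rw [h1, h2]
    exact RCLike.inner_apply' _ _
  have horth : Orthonormal ℂ Φ := by
    rw [orthonormal_iff_ite]
    intro n m
    rw [hinner_eq n (φ m) (hφmem m), key n m]
  have hbessel := horth.sum_inner_products_le (s := S) Fl
  -- identify the inner products
  have hinner : ∀ n : ℤ, (inner ℂ (Φ n) Fl : ℂ) = ∫ t in a..b, e (-(P t + t ^ d * (n:ℝ))) := by
    intro n
    rw [hFl, hinner_eq n f₀ hf₀mem]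
    have step : ∀ t ∈ Set.Ioc a a', (starRingEnd ℂ) (φ n t) * f₀ t =
        Set.indicator (Set.Ioc a b) (fun t => e (-(P t + t ^ d * (n:ℝ)))) t := by
      intro t ht
      by_cases htb : t ∈ Set.Ioc a b
      · rw [Set.indicator_of_mem htb]
        have hwne : (w t : ℂ) ≠ 0 := by
          exact_mod_cast ne_of_gt (hwpos t (le_trans ha (le_of_lt htb.1)))
        rw [hf₀, Set.indicator_of_mem htb, hφ]
        simp only
        rw [map_mul, Complex.conj_ofReal, conj_e]
        field_simp
        rw [← e_add]
        congr 1
        ring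
      · rw [Set.indicator_of_notMem htb, hf₀, Set.indicator_of_notMem htb, mul_zero]
    rw [hμ]
    rw [setIntegral_congr_fun measurableSet_Ioc step]
    rw [setIntegral_indicator measurableSet_Ioc]
    rw [Set.inter_eq_self_of_subset_right (Set.Ioc_subset_Ioc_right hba')]
    rw [integral_of_le hab]
  -- norm bound on Fl
  have hnormFl : ‖Fl‖ ≤ 2 * c0⁻¹ := by
    rw [hFl, MeasureTheory.Lp.norm_toLp]
    have h1 : eLpNorm f₀ 2 μ ≤ μ Set.univ ^ (2:ℝ≥0∞).toReal⁻¹ * ENNReal.ofReal c0⁻¹ :=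
      eLpNorm_le_of_ae_bound (ae_of_all _ hf₀bd)
    have h2 : μ Set.univ ≤ 4 := by
      rw [hμ, Measure.restrict_apply_univ, Real.volume_Ioc]
      calc ENNReal.ofReal (a' - a) ≤ ENNReal.ofReal 4 := ENNReal.ofReal_le_ofReal (by linarith)
        _ = 4 := by norm_num
    have h3 : μ Set.univ ^ (2:ℝ≥0∞).toReal⁻¹ ≤ 2 := by
      calc μ Set.univ ^ (2:ℝ≥0∞).toReal⁻¹ ≤ (4:ℝ≥0∞) ^ (2:ℝ≥0∞).toReal⁻¹ := by
            exact ENNReal.rpow_le_rpow h2 (by norm_num)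
        _ = 2 := by
            rw [show (4:ℝ≥0∞) = 2 ^ (2:ℕ) by norm_num, ← ENNReal.rpow_natCast,
              ← ENNReal.rpow_mul]
            norm_num
    have h4 : eLpNorm f₀ 2 μ ≤ ENNReal.ofReal (2 * c0⁻¹) := by
      calc eLpNorm f₀ 2 μ ≤ μ Set.univ ^ (2:ℝ≥0∞).toReal⁻¹ * ENNReal.ofReal c0⁻¹ := h1
        _ ≤ 2 * ENNReal.ofReal c0⁻¹ := by exact mul_le_mul_left h3 _
        _ = ENNReal.ofReal (2 * c0⁻¹) := by
            rw [ENNReal.ofReal_mul (by norm_num)]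
            norm_num
    calc (eLpNorm f₀ 2 μ).toReal ≤ (ENNReal.ofReal (2 * c0⁻¹)).toReal :=
          ENNReal.toReal_mono ENNReal.ofReal_ne_top h4
      _ = 2 * c0⁻¹ := ENNReal.toReal_ofReal (by positivity)
  -- conclude
  have hsum : ∑ n ∈ S, ‖∫ t in a..b, e (-(P t + t ^ d * (n:ℝ)))‖ ^ 2 ≤ ‖Fl‖ ^ 2 := by
    calc ∑ n ∈ S, ‖∫ t in a..b, e (-(P t + t ^ d * (n:ℝ)))‖ ^ 2
        = ∑ n ∈ S, ‖(inner ℂ (Φ n) Fl : ℂ)‖ ^ 2 := by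
          apply Finset.sum_congr rfl
          intro n _
          rw [hinner n]
      _ ≤ ‖Fl‖ ^ 2 := hbessel
  have hc0sq : c0 ^ 2 = (d:ℝ) * (1/2) ^ k := Real.sq_sqrt (by positivity)
  have hfin : ‖Fl‖ ^ 2 ≤ 2 ^ (k + 3) := by
    have h1 : ‖Fl‖ ^ 2 ≤ (2 * c0⁻¹) ^ 2 := by
      apply pow_le_pow_left₀ (norm_nonneg _) hnormFl
    have h2 : (2 * c0⁻¹) ^ 2 = 4 * (c0 ^ 2)⁻¹ := by ring
    have hd1 : (1:ℝ) ≤ (d:ℝ) := by exact_mod_cast Nat.one_le_iff_ne_zero.mpr (by omega)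
    have h3 : (c0 ^ 2)⁻¹ ≤ 2 ^ k := by
      rw [hc0sq]
      rw [show ((d:ℝ) * (1/2)^k)⁻¹ = (d:ℝ)⁻¹ * 2 ^ k by
        rw [mul_inv]
        congr 1
        rw [div_pow, one_pow, inv_div, div_one]]
      have : (d:ℝ)⁻¹ ≤ 1 := by
        rw [inv_le_one_iff₀]
        right; exact hd1
      nlinarith [pow_pos (by norm_num : (0:ℝ) < 2) k]
    calc ‖Fl‖ ^ 2 ≤ 4 * (c0 ^ 2)⁻¹ := by rw [← h2]; exact h1
      _ ≤ 4 * 2 ^ k := by linarith [pow_pos (by norm_num : (0:ℝ) < 2) k]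
      _ ≤ 2 ^ (k + 3) := by
        rw [pow_add]
        nlinarith [pow_pos (by norm_num : (0:ℝ) < 2) k]
  exact le_trans hsum hfin

set_option maxHeartbeats 2000000 in
/-- Short-interval L² estimate for the moment curve measure over [a,b] ⊆ [1/2,1]. -/
theorem stmt_11 (d : ℕ) (hd : 2 ≤ d) :
    ∃ C : ℝ, 0 < C ∧ ∀ (a b : ℝ) (N : ℕ), 1 / 2 ≤ a → a ≤ b → b ≤ 1 →
      b - a ≤ 1 / (2 * d) → 1 ≤ N →
      ∑ ξ ∈ Fintype.piFinset (fun i : Fin d =>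
          Finset.Icc (-(((d * (d + 1) / 2 : ℕ) : ℤ) * (N : ℤ) ^ (i.1 + 1)))
            (((d * (d + 1) / 2 : ℕ) : ℤ) * (N : ℤ) ^ (i.1 + 1))),
        ‖∫ t in a..b, e (-(∑ i : Fin d, t ^ (i.1 + 1) * (ξ i : ℝ)))‖ ^ 2
      ≤ C * (N : ℝ) ^ (d * (d + 1) / 2 - d) := by
  obtain ⟨m, rfl⟩ : ∃ m, d = m + 1 := ⟨d - 1, by omega⟩
  set K : ℕ := (m + 1) * (m + 1 + 1) / 2 with hK
  refine ⟨(3 * (K:ℝ) + 1) ^ m * 2 ^ (m + 3), by positivity, ?_⟩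
  intro a b N ha hab hb _ hN
  set S : Fin (m+1) → Finset ℤ := fun i =>
    Finset.Icc (-((K:ℤ) * (N:ℤ) ^ (i.1 + 1))) ((K:ℤ) * (N:ℤ) ^ (i.1 + 1)) with hS
  have hsplit : Fintype.piFinset S =
      (S (Fin.last m) ×ˢ Fintype.piFinset (Fin.init S)).map
        (Fin.snocEquiv (fun _ => ℤ)).toEmbedding := by
    simpa using Finset.filter_piFinset_eq_map_snocEquiv S (fun _ => True)
  rw [hsplit, Finset.sum_map, Finset.sum_product, Finset.sum_comm]
  have hNr : (1:ℝ) ≤ (N:ℝ) := by exact_mod_cast hN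
  have hexp : ∑ i : Fin m, (i.1 + 1) = m * (m + 1) / 2 := by
    rw [Fin.sum_univ_eq_sum_range (fun i => i + 1) m]
    have h1 : ∑ i ∈ Finset.range (m+1), i = ∑ i ∈ Finset.range m, (i + 1) + 0 :=
      Finset.sum_range_succ' id m
    have h2 : ∑ i ∈ Finset.range (m+1), i = (m+1) * m / 2 := Finset.sum_range_id (m+1)
    have h3 : (m+1) * m = m * (m+1) := Nat.mul_comm _ _
    omega
  have e1 : (m + 1) * (m + 1 + 1) / 2 - (m + 1) = m * (m + 1) / 2 := by
    have h : (m + 1) * (m + 1 + 1) = m * (m + 1) + 2 * (m + 1) := by ring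
    rw [h, Nat.add_mul_div_left _ _ (by norm_num : 0 < 2)]
    omega
  have hcard : ((Fintype.piFinset (Fin.init S)).card : ℝ) ≤
      (3 * (K:ℝ) + 1) ^ m * (N:ℝ) ^ (m * (m + 1) / 2) := by
    rw [Fintype.card_piFinset]
    push_cast
    calc ∏ i : Fin m, ((Fin.init S i).card : ℝ)
        ≤ ∏ i : Fin m, ((3 * (K:ℝ) + 1) * (N:ℝ) ^ (i.1 + 1)) := by
          apply Finset.prod_le_prod
          · intro i _; positivity
          · intro i _
            have hL : (0:ℤ) ≤ (K:ℤ) * (N:ℤ) ^ (i.1 + 1) := by positivity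
            have h1 : (Fin.init S i).card = (2 * ((K:ℤ) * (N:ℤ) ^ (i.1 + 1)) + 1).toNat := by
              show (S i.castSucc).card = _
              rw [hS]
              simp only [Fin.coe_castSucc]
              rw [Int.card_Icc]
              congr 1
              ring
            rw [h1]
            rw [show (((2 * ((K:ℤ) * (N:ℤ) ^ (i.1 + 1)) + 1).toNat : ℕ) : ℝ)
                = ((2 * ((K:ℤ) * (N:ℤ) ^ (i.1 + 1)) + 1 : ℤ) : ℝ) from by
              rw [← Int.cast_natCast, Int.toNat_of_nonneg (by linarith)]]
            push_cast
            have hNe : (1:ℝ) ≤ (N:ℝ) ^ (i.1 + 1) := one_le_pow₀ hNr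
            have hK0 : (0:ℝ) ≤ (K:ℝ) := by positivity
            nlinarith
      _ = (3 * (K:ℝ) + 1) ^ m * (N:ℝ) ^ (m * (m + 1) / 2) := by
          rw [Finset.prod_mul_distrib, Finset.prod_const, Finset.card_univ, Fintype.card_fin,
            Finset.prod_pow_eq_pow_sum, hexp]
  calc ∑ η ∈ Fintype.piFinset (Fin.init S), ∑ n ∈ S (Fin.last m),
        ‖∫ t in a..b, e (-(∑ i : Fin (m+1),
          t ^ (i.1 + 1) * (((Fin.snocEquiv (fun _ => ℤ)).toEmbedding (n, η)) i : ℝ)))‖ ^ 2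
      ≤ ∑ η ∈ Fintype.piFinset (Fin.init S), (2:ℝ) ^ (m + 3) := by
        apply Finset.sum_le_sum
        intro η hη
        have hPc : Continuous (fun t : ℝ => ∑ i : Fin m, t ^ (i.1 + 1) * ((η i : ℤ) : ℝ)) := by
          apply continuous_finset_sum
          intro i _
          exact (continuous_pow _).mul continuous_const
        have heq : ∀ n : ℤ,
            (∫ t in a..b, e (-(∑ i : Fin (m+1),
              t ^ (i.1 + 1) * (((Fin.snocEquiv (fun _ => ℤ)).toEmbedding (n, η)) i : ℝ))))
            = ∫ t in a..b,
                e (-((∑ i : Fin m, t ^ (i.1 + 1) * ((η i : ℤ) : ℝ)) + t ^ (m+1) * (n:ℝ))) := by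
          intro n
          apply intervalIntegral.integral_congr
          intro t _
          have harg : (∑ i : Fin (m+1),
              t ^ (i.1 + 1) * (((Fin.snocEquiv (fun _ => ℤ)).toEmbedding (n, η)) i : ℝ))
              = (∑ i : Fin m, t ^ (i.1 + 1) * ((η i : ℤ) : ℝ)) + t ^ (m+1) * (n:ℝ) := by
            rw [Fin.sum_univ_castSucc]
            simp only [Equiv.coe_toEmbedding, Fin.snocEquiv, Equiv.coe_fn_mk,
              Fin.snoc_castSucc, Fin.snoc_last, Fin.coe_castSucc, Fin.val_last]
          exact congrArg e (congrArg Neg.neg harg)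
        simp only [heq]
        exact core m a b ha hab hb _ hPc (S (Fin.last m))
    _ = ((Fintype.piFinset (Fin.init S)).card : ℝ) * 2 ^ (m + 3) := by
        rw [Finset.sum_const, nsmul_eq_mul]
    _ ≤ (3 * (K:ℝ) + 1) ^ m * (N:ℝ) ^ (m * (m + 1) / 2) * 2 ^ (m + 3) := by
        apply mul_le_mul_of_nonneg_right hcard (by positivity)
    _ = (3 * (K:ℝ) + 1) ^ m * 2 ^ (m + 3) * (N:ℝ) ^ ((m + 1) * (m + 1 + 1) / 2 - (m + 1)) := by
        rw [e1]
        ring
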